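/- If f is essentially unbounded (‖f‖_∞ = ∞) and ‖f‖_{B_{p,q₀}} < ∞ for some p ≥ 1, q₀ > 0, then liminf_{q→∞} ‖f‖_{B_{p,q}} = ∞. -/

import Mathlib

open MeasureTheory Filter Real Topology ENNReal

noncomputable def e0 : ℝ := Real.exp 1 - 1

noncomputable def Bpq (p q t : ℝ) : ℝ := t ^ p * (Real.log (e0 + t)) ^ q

noncomputable def BpqBar (p q t : ℝ) : ℝ := t ^ p * (Real.log (Real.exp 1 + t)) ^ q

/-- The Luxemburg norm of `f` with respect to the Young function `A`. -/
noncomputable def luxNorm {X : Type*} [MeasurableSpace X] (μ : Measure X)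
    (A : ℝ → ℝ) (f : X → ℝ) : ℝ≥0∞ :=
  sInf {lam : ℝ≥0∞ | 0 < lam ∧ lam ≠ ∞ ∧
    ∫⁻ x, ENNReal.ofReal (A (|f x| / lam.toReal)) ∂μ ≤ 1}

/-- `A` is a Young function: continuous, convex, increasing on `[0,∞)`,
`A 0 = 0` and `A t / t → ∞`. -/
def IsYoung (A : ℝ → ℝ) : Prop :=
  ContinuousOn A (Set.Ici 0) ∧ ConvexOn ℝ (Set.Ici 0) A ∧ MonotoneOn A (Set.Ici 0) ∧
    A 0 = 0 ∧ Tendsto (fun t => A t / t) atTop atTop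

theorem stmt14 {X : Type*} [MeasurableSpace X] (μ : Measure X) (f : X → ℝ)
    (hf : Measurable f) (p q₀ : ℝ) (hp : 1 ≤ p) (hq₀ : 0 < q₀)
    (hunb : eLpNormEssSup f μ = ∞) (hfin : luxNorm μ (Bpq p q₀) f < ∞) :
    Filter.liminf (fun q : ℝ => luxNorm μ (Bpq p q) f) atTop = ∞ := by
  have hE : (1:ℝ) < Real.exp 1 := by
    have := Real.exp_one_gt_d9; linarith
  have hE0 := Real.exp_pos 1
  set c : ℝ := Real.log (e0 + Real.exp 1) with hcdef
  have hc1 : 1 < c := by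
    have h1 : Real.exp 1 < e0 + Real.exp 1 := by
      simp only [e0]; linarith
    calc (1:ℝ) = Real.log (Real.exp 1) := (Real.log_exp 1).symm
      _ < c := Real.log_lt_log hE0 h1
  have hc0 : 0 < c := lt_trans one_pos hc1
  have hctend : Tendsto (fun q : ℝ => c ^ q) atTop atTop := by
    have heq : (fun q : ℝ => c ^ q) = fun q => Real.exp (Real.log c * q) := by
      funext q; rw [Real.rpow_def_of_pos hc0]
    rw [heq]
    exact Real.tendsto_exp_atTop.comp
      (Tendsto.const_mul_atTop (Real.log_pos hc1) tendsto_id)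
  apply Tendsto.liminf_eq
  apply ENNReal.tendsto_nhds_top
  intro n
  -- the truncation level
  set M : ℝ := ((n : ℝ) + 1) * Real.exp 1 with hMdef
  set S : Set X := {x | M ≤ |f x|} with hSdef
  have hS : MeasurableSet S := measurableSet_le measurable_const hf.abs
  have hS0 : μ S ≠ 0 := by
    intro h0
    have hae : ∀ᵐ x ∂μ, ‖f x‖ ≤ M := by
      have : ∀ᵐ x ∂μ, x ∉ S := by
        rw [MeasureTheory.ae_iff]; simpa using h0
      filter_upwards [this] with x hx
      simp only [hSdef, Set.mem_setOf_eq, not_le] at hx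
      rw [Real.norm_eq_abs]; exact hx.le
    have := eLpNormEssSup_lt_top_of_ae_bound (μ := μ) hae
    rw [hunb] at this
    exact (lt_irrefl _ this)
  set m : ℝ≥0∞ := min (μ S) 1 with hmdef
  have hm0 : m ≠ 0 := by
    simp only [hmdef, ne_eq, min_eq_iff, not_or]
    push_neg
    constructor <;> intro h <;> simp_all
  have hmtop : m ≠ ∞ := by
    simp only [hmdef, ne_eq]
    exact (lt_of_le_of_lt (min_le_right _ _) one_lt_top).ne
  have hminvtop : m⁻¹ ≠ ∞ := by
    simpa [ENNReal.inv_ne_top] using hm0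
  set R : ℝ := (m⁻¹).toReal + 1 with hRdef
  filter_upwards [eventually_ge_atTop (0:ℝ), hctend.eventually_gt_atTop (R / Real.exp 1)]
    with q hq0 hcq
  have hRlt : R < Real.exp 1 * c ^ q := by
    rw [div_lt_iff₀ hE0] at hcq; linarith [hcq]
  -- lower bound on luxNorm
  have hN : (n : ℝ≥0∞) < ENNReal.ofReal ((n : ℝ) + 1) := by
    rw [show ((n : ℝ≥0∞)) = ENNReal.ofReal (n : ℝ) from (ENNReal.ofReal_natCast n).symm]
    rw [ENNReal.ofReal_lt_ofReal_iff (by positivity)]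
    linarith
  refine lt_of_lt_of_le hN (le_sInf ?_)
  rintro lam ⟨hlam0, hlamtop, hint⟩
  by_contra hlt
  push_neg at hlt
  have hlamR : lam.toReal < (n : ℝ) + 1 :=
    (ENNReal.lt_ofReal_iff_toReal_lt hlamtop).mp hlt
  have hlamR0 : 0 < lam.toReal := ENNReal.toReal_pos hlam0.ne' hlamtop
  -- pointwise bound on S
  have hpt : ∀ x ∈ S, Real.exp 1 * c ^ q ≤ Bpq p q (|f x| / lam.toReal) := by
    intro x hx
    have hfx : M ≤ |f x| := hx
    set t : ℝ := |f x| / lam.toReal with htdef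
    have ht0 : 0 ≤ t := div_nonneg (abs_nonneg _) hlamR0.le
    have hte : Real.exp 1 ≤ t := by
      have h1 : M / ((n : ℝ) + 1) ≤ |f x| / lam.toReal :=
        div_le_div₀ (abs_nonneg _) hfx hlamR0 hlamR.le
      have h2 : M / ((n : ℝ) + 1) = Real.exp 1 := by
        rw [hMdef]; field_simp
      rw [h2] at h1; exact h1
    have h1 : Real.exp 1 ≤ t ^ p := by
      calc Real.exp 1 = Real.exp 1 ^ (1:ℝ) := (Real.rpow_one _).symm
        _ ≤ Real.exp 1 ^ p := Real.rpow_le_rpow_of_exponent_le hE.le hp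
        _ ≤ t ^ p := Real.rpow_le_rpow hE0.le hte (by linarith)
    have h2 : c ^ q ≤ (Real.log (e0 + t)) ^ q := by
      apply Real.rpow_le_rpow hc0.le _ hq0
      apply Real.log_le_log (by simp only [e0]; linarith)
      linarith
    calc Real.exp 1 * c ^ q ≤ t ^ p * (Real.log (e0 + t)) ^ q :=
          mul_le_mul h1 h2 (Real.rpow_nonneg hc0.le q)
            (Real.rpow_nonneg ht0 p)
      _ = Bpq p q t := rfl
  -- integral lower bound
  have hintlb : ENNReal.ofReal (Real.exp 1 * c ^ q) * μ S ≤
      ∫⁻ x, ENNReal.ofReal (Bpq p q (|f x| / lam.toReal)) ∂μ := by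
    calc ENNReal.ofReal (Real.exp 1 * c ^ q) * μ S
        = ∫⁻ x, S.indicator (fun _ => ENNReal.ofReal (Real.exp 1 * c ^ q)) x ∂μ := by
          rw [lintegral_indicator hS, setLIntegral_const]
      _ ≤ ∫⁻ x, ENNReal.ofReal (Bpq p q (|f x| / lam.toReal)) ∂μ := by
          apply lintegral_mono
          intro x
          by_cases hx : x ∈ S
          · simp only [Set.indicator_of_mem hx]
            exact ENNReal.ofReal_le_ofReal (hpt x hx)
          · simp [Set.indicator_of_notMem hx]
  have hgt1 : 1 < ENNReal.ofReal (Real.exp 1 * c ^ q) * μ S := by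
    have hinvlt : m⁻¹ < ENNReal.ofReal (Real.exp 1 * c ^ q) := by
      rw [ENNReal.lt_ofReal_iff_toReal_lt hminvtop]
      simp only [hRdef] at hRlt; linarith
    calc (1 : ℝ≥0∞) = m⁻¹ * m := (ENNReal.inv_mul_cancel hm0 hmtop).symm
      _ < ENNReal.ofReal (Real.exp 1 * c ^ q) * m :=
          ENNReal.mul_lt_mul_left hm0 hmtop hinvlt
      _ ≤ ENNReal.ofReal (Real.exp 1 * c ^ q) * μ S :=
          mul_le_mul_right (min_le_left _ _) _
  exact absurd (le_trans hintlb hint) (not_le.mpr hgt1)
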